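/- Let R, S, T be monads on a category C, let τ : TR ⇒ RT be a weak distributive law, let σ : SR ⇒ RS be a distributive law, and let γ : S ⇒ T be a monad morphism such that Rγ ∘ σ = τ ∘ γR. Define the trivial weak distributive law λ := η^S μ^T ∘ Tγ : TS ⇒ ST. Then the Yang–Baxter equation σT ∘ Sτ ∘ λR = Rλ ∘ τS ∘ Tσ holds. -/

import Mathlib

open CategoryTheory

universe v u

/-- Raw monad data: an endofunctor together with unit and multiplication components
(the monad laws are not required). -/
structure MonadData (C : Type u) [Category.{v} C] where
  F : C ⥤ C
  unit : ∀ X : C, X ⟶ F.obj X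
  mult : ∀ X : C, F.obj (F.obj X) ⟶ F.obj X

variable {C : Type u} [Category.{v} C]

/-- The data underlying a monad. -/
def CategoryTheory.Monad.data (T : Monad C) : MonadData C where
  F := T.toFunctor
  unit X := T.η.app X
  mult X := T.μ.app X

/-- The monad laws (two unitality axioms and associativity) for raw monad data. -/
def MonadData.IsMonad (A : MonadData C) : Prop :=
  (∀ X : C, A.unit (A.F.obj X) ≫ A.mult X = 𝟙 (A.F.obj X)) ∧
  (∀ X : C, A.F.map (A.unit X) ≫ A.mult X = 𝟙 (A.F.obj X)) ∧
  (∀ X : C, A.F.map (A.mult X) ≫ A.mult X = A.mult (A.F.obj X) ≫ A.mult X)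

/-- Axiom (η+) for a law `l : TS ⇒ ST` of the monad `A` (playing `S`) over `B` (playing `T`). -/
def EtaPlus (A B : MonadData C) (l : (A.F ⋙ B.F) ⟶ (B.F ⋙ A.F)) : Prop :=
  ∀ X : C, B.F.map (A.unit X) ≫ l.app X = A.unit (B.F.obj X)

/-- Axiom (μ+): `λ ∘ Tμ^S = μ^S T ∘ Sλ ∘ λS`. -/
def MuPlus (A B : MonadData C) (l : (A.F ⋙ B.F) ⟶ (B.F ⋙ A.F)) : Prop :=
  ∀ X : C, B.F.map (A.mult X) ≫ l.app X =
    l.app (A.F.obj X) ≫ A.F.map (l.app X) ≫ A.mult (B.F.obj X)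

/-- Axiom (η−): `λ ∘ η^T S = Sη^T`. -/
def EtaMinus (A B : MonadData C) (l : (A.F ⋙ B.F) ⟶ (B.F ⋙ A.F)) : Prop :=
  ∀ X : C, B.unit (A.F.obj X) ≫ l.app X = A.F.map (B.unit X)

/-- Axiom (μ−): `λ ∘ μ^T S = Sμ^T ∘ λT ∘ Tλ`. -/
def MuMinus (A B : MonadData C) (l : (A.F ⋙ B.F) ⟶ (B.F ⋙ A.F)) : Prop :=
  ∀ X : C, B.mult (A.F.obj X) ≫ l.app X =
    B.F.map (l.app X) ≫ l.app (B.F.obj X) ≫ A.F.map (B.mult X)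

/-- A weak distributive law satisfies (η+), (μ+) and (μ−). -/
def IsWDL (A B : MonadData C) (l : (A.F ⋙ B.F) ⟶ (B.F ⋙ A.F)) : Prop :=
  EtaPlus A B l ∧ MuPlus A B l ∧ MuMinus A B l

/-- A distributive law satisfies all four axioms. -/
def IsDL (A B : MonadData C) (l : (A.F ⋙ B.F) ⟶ (B.F ⋙ A.F)) : Prop :=
  EtaPlus A B l ∧ MuPlus A B l ∧ EtaMinus A B l ∧ MuMinus A B l

/-- The natural family `κ := Sμ^T ∘ λT ∘ η^T ST : ST ⇒ ST` associated with a law. -/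
def lawKappa (A B : MonadData C) (l : (A.F ⋙ B.F) ⟶ (B.F ⋙ A.F)) (X : C) :
    A.F.obj (B.F.obj X) ⟶ A.F.obj (B.F.obj X) :=
  B.unit (A.F.obj (B.F.obj X)) ≫ l.app (B.F.obj X) ≫ A.F.map (B.mult X)

/-- The Yang–Baxter equation `σT ∘ Sτ ∘ λR = Rλ ∘ τS ∘ Tσ` for laws
`l : TS ⇒ ST`, `s : SR ⇒ RS`, `t : TR ⇒ RT`. -/
def YangBaxter (Rm Sm Tm : MonadData C)
    (l : (Sm.F ⋙ Tm.F) ⟶ (Tm.F ⋙ Sm.F))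
    (s : (Rm.F ⋙ Sm.F) ⟶ (Sm.F ⋙ Rm.F))
    (t : (Rm.F ⋙ Tm.F) ⟶ (Tm.F ⋙ Rm.F)) : Prop :=
  ∀ X : C, l.app (Rm.F.obj X) ≫ Sm.F.map (t.app X) ≫ s.app (Tm.F.obj X) =
    Tm.F.map (s.app X) ≫ t.app (Sm.F.obj X) ≫ Rm.F.map (l.app X)

/-- The composite monad data `S ∘_λ T = (ST, η^S η^T, μ^S μ^T ∘ SλT)` of a distributive law. -/
def compData (A B : MonadData C) (l : (A.F ⋙ B.F) ⟶ (B.F ⋙ A.F)) : MonadData C where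
  F := B.F ⋙ A.F
  unit X := B.unit X ≫ A.unit (B.F.obj X)
  mult X := A.F.map (l.app (B.F.obj X)) ≫ A.F.map (A.F.map (B.mult X)) ≫ A.mult (B.F.obj X)

/-- The weak composite monad data `S •_λ T` built from a splitting `(K, p, i)` of `κ`. -/
def wcompData (A B : MonadData C) (l : (A.F ⋙ B.F) ⟶ (B.F ⋙ A.F))
    (K : C ⥤ C) (p : (B.F ⋙ A.F) ⟶ K) (i : K ⟶ (B.F ⋙ A.F)) : MonadData C where
  F := K
  unit X := B.unit X ≫ A.unit (B.F.obj X) ≫ p.app X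
  mult X := i.app (K.obj X) ≫ A.F.map (B.F.map (i.app X)) ≫ A.F.map (l.app (B.F.obj X)) ≫
    A.F.map (A.F.map (B.mult X)) ≫ A.mult (B.F.obj X) ≫ p.app X

/-- The trivial weak distributive law `η^S μ^T ∘ Tγ : TS ⇒ ST` induced by a monad
morphism `γ : S ⇒ T`. -/
def trivLaw {C : Type u} [Category.{v} C] (S T : Monad C)
    (γ : S.toFunctor ⟶ T.toFunctor) :
    (S.toFunctor ⋙ T.toFunctor) ⟶ (T.toFunctor ⋙ S.toFunctor) :=
  Functor.whiskerRight γ T.toFunctor ≫ T.μ ≫ Functor.whiskerLeft T.toFunctor S.η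

/-- first half of Proposition 4.6. Let `τ : TR ⇒ RT` be a weak
distributive law, `σ : SR ⇒ RS` a distributive law, and `γ : S ⇒ T` a monad
morphism with `Rγ ∘ σ = τ ∘ γR`. Then the trivial weak distributive law
`λ := η^S μ^T ∘ Tγ` satisfies the Yang–Baxter equation with `σ` and `τ`. -/
theorem yb_trivial_lambda {C : Type u} [Category.{v} C] (R S T : Monad C)
    (s : (R.toFunctor ⋙ S.toFunctor) ⟶ (S.toFunctor ⋙ R.toFunctor))
    (t : (R.toFunctor ⋙ T.toFunctor) ⟶ (T.toFunctor ⋙ R.toFunctor))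
    (γ : S.toFunctor ⟶ T.toFunctor)
    (ht : IsWDL R.data T.data t) (hs : IsDL R.data S.data s)
    (hγη : ∀ X : C, S.η.app X ≫ γ.app X = T.η.app X)
    (hγμ : ∀ X : C, S.μ.app X ≫ γ.app X = γ.app (S.obj X) ≫ T.map (γ.app X) ≫ T.μ.app X)
    (hcompat : ∀ X : C, s.app X ≫ R.map (γ.app X) = γ.app (R.obj X) ≫ t.app X) :
    YangBaxter R.data S.data T.data (trivLaw S T γ) s t := by
  obtain ⟨-, -, htm⟩ := ht
  obtain ⟨-, -, hse, -⟩ := hs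
  intro X
  simp only [YangBaxter, Monad.data, trivLaw, NatTrans.comp_app, Functor.whiskerRight_app,
    Functor.whiskerLeft_app, Functor.comp_obj, Functor.comp_map, Functor.map_comp, Category.assoc]
  have h1 : S.η.app (T.obj (R.obj X)) ≫ S.map (t.app X)
      = t.app X ≫ S.η.app (R.obj (T.obj X)) := (S.η.naturality (t.app X)).symm
  have h2 : S.η.app (R.obj (T.obj X)) ≫ s.app (T.obj X)
      = R.map (S.η.app (T.obj X)) := hse (T.obj X)
  have h3 : T.μ.app (R.obj X) ≫ t.app X
      = T.map (t.app X) ≫ t.app (T.obj X) ≫ R.map (T.μ.app X) := htm X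
  have h4 : t.app (S.obj X) ≫ R.map (T.map (γ.app X))
      = T.map (R.map (γ.app X)) ≫ t.app (T.obj X) := (t.naturality (γ.app X)).symm
  calc T.map (γ.app (R.obj X)) ≫ T.μ.app (R.obj X) ≫ S.η.app (T.obj (R.obj X)) ≫
        S.map (t.app X) ≫ s.app (T.obj X)
      = T.map (γ.app (R.obj X)) ≫ (T.μ.app (R.obj X) ≫ t.app X) ≫
        S.η.app (R.obj (T.obj X)) ≫ s.app (T.obj X) := by
        rw [reassoc_of% h1]; simp [Category.assoc]
    _ = T.map (γ.app (R.obj X)) ≫ (T.map (t.app X) ≫ t.app (T.obj X) ≫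
        R.map (T.μ.app X)) ≫ R.map (S.η.app (T.obj X)) := by rw [h2, h3]
    _ = T.map (γ.app (R.obj X) ≫ t.app X) ≫ t.app (T.obj X) ≫
        R.map (T.μ.app X) ≫ R.map (S.η.app (T.obj X)) := by
        simp [Functor.map_comp, Category.assoc]
    _ = T.map (s.app X ≫ R.map (γ.app X)) ≫ t.app (T.obj X) ≫
        R.map (T.μ.app X) ≫ R.map (S.η.app (T.obj X)) := by rw [hcompat X]
    _ = T.map (s.app X) ≫ (t.app (S.obj X) ≫ R.map (T.map (γ.app X))) ≫
        R.map (T.μ.app X) ≫ R.map (S.η.app (T.obj X)) := by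
        rw [h4]; simp [Functor.map_comp, Category.assoc]
    _ = T.map (s.app X) ≫ t.app (S.obj X) ≫ R.map (T.map (γ.app X)) ≫
        R.map (T.μ.app X) ≫ R.map (S.η.app (T.obj X)) := by simp [Category.assoc]
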